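/- Let G be a graph on vertex set [n] and fix N ≥ 1. Then the chromatic symmetric polynomial satisfies X_G(x_1,…,x_N) = Σ_{π ∈ Π_{G,n}} μ(0̂,π) Π_{B a block of π} p_{|B|}(x_1,…,x_N), where μ is the Möbius function of the poset Π_{G,n} and p_m = x_1^m+⋯+x_N^m is the power sum polynomial. (Since μ(0̂,π) has sign (−1)^{n−|π|}, this is equivalent to the paper's formulation ωX_G = Σ_π |μ(0̂,π)| p_{pa(π)}.) -/

import Mathlib

open scoped Classical

/-- The chromatic symmetric polynomial `X_G(x_1,…,x_N)` of a graph `G` on `[n]`. -/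
noncomputable def chromSym (N n : ℕ) (G : SimpleGraph (Fin n)) : MvPolynomial (Fin N) ℤ :=
  ∑ c ∈ Finset.univ.filter (fun c : Fin n → Fin N => ∀ a b, G.Adj a b → c a ≠ c b),
    ∏ i, MvPolynomial.X (c i)

/-- `π` is a set partition of `[n]`: its blocks are nonempty, pairwise disjoint,
and their union is all of `[n]`. -/
def IsSetPartition {n : ℕ} (π : Finset (Finset (Fin n))) : Prop :=
  (∀ B ∈ π, B.Nonempty) ∧ (∀ B ∈ π, ∀ C ∈ π, B ≠ C → Disjoint B C) ∧
    π.sup id = Finset.univ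

/-- The G-connected set partitions of `[n]`: the subgraph of `G` induced on each
block is connected.  This is the poset `Π_{G,n}`. -/
noncomputable def connPartitions {n : ℕ} (G : SimpleGraph (Fin n)) :
    Finset (Finset (Finset (Fin n))) :=
  Finset.univ.filter fun π => IsSetPartition π ∧
    ∀ B ∈ π, (G.induce (B : Set (Fin n))).Connected

/-- The refinement order on set partitions: `π ≤ θ` iff each block of `π` is
contained in some block of `θ`. -/
def Refines {n : ℕ} (π θ : Finset (Finset (Fin n))) : Prop :=
  ∀ B ∈ π, ∃ C ∈ θ, B ⊆ C

/-- The minimum set partition `0̂` of `[n]`, into singletons. -/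
noncomputable def botPartition (n : ℕ) : Finset (Finset (Fin n)) :=
  Finset.univ.image fun i => {i}

/-- The power sum polynomial `p_m = x_1^m + ⋯ + x_N^m`. -/
noncomputable def powSum (N m : ℕ) : MvPolynomial (Fin N) ℤ :=
  ∑ i : Fin N, MvPolynomial.X i ^ m

noncomputable section StanleyAux

variable {n N : ℕ}

def monoG (G : SimpleGraph (Fin n)) (c : Fin n → Fin N) : SimpleGraph (Fin n) where
  Adj a b := G.Adj a b ∧ c a = c b
  symm := ⟨fun _ _ h => ⟨h.1.symm, h.2.symm⟩⟩
  loopless := ⟨fun a h => G.loopless.irrefl a h.1⟩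

def compo (G : SimpleGraph (Fin n)) (c : Fin n → Fin N) (i : Fin n) : Finset (Fin n) :=
  Finset.univ.filter fun j => (monoG G c).Reachable i j

def pic (G : SimpleGraph (Fin n)) (c : Fin n → Fin N) : Finset (Finset (Fin n)) :=
  Finset.univ.image (compo G c)

variable {G : SimpleGraph (Fin n)} {c : Fin n → Fin N}

lemma mem_compo {i j : Fin n} : j ∈ compo G c i ↔ (monoG G c).Reachable i j := by
  simp [compo]

lemma self_mem_compo {i : Fin n} : i ∈ compo G c i := mem_compo.mpr (SimpleGraph.Reachable.refl i)

lemma compo_eq_of_reachable {i j : Fin n} (h : (monoG G c).Reachable i j) :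
    compo G c i = compo G c j := by
  ext x
  simp only [mem_compo]
  exact ⟨fun hx => h.symm.trans hx, fun hx => h.trans hx⟩

lemma monoG_walk_color : ∀ {i j : Fin n}, (monoG G c).Walk i j → c i = c j := by
  intro i j w
  induction w with
  | nil => rfl
  | cons h _ ih => exact h.2.trans ih

lemma monoG_reach_color {i j : Fin n} (h : (monoG G c).Reachable i j) : c i = c j :=
  h.elim fun w => monoG_walk_color w

/-- Walks in the monochromatic subgraph stay inside a component and lift to the
induced subgraph of `G` on that component. -/
lemma induce_reach_of_walk {i : Fin n} :
    ∀ {u v : Fin n}, (monoG G c).Walk u v →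
      ∀ (hu : u ∈ (↑(compo G c i) : Set (Fin n))) (hv : v ∈ (↑(compo G c i) : Set (Fin n))),
        (G.induce (↑(compo G c i) : Set (Fin n))).Reachable ⟨u, hu⟩ ⟨v, hv⟩ := by
  intro u v w
  induction w with
  | nil => intro hu hv; exact SimpleGraph.Reachable.refl _
  | @cons u k v h p ih =>
    intro hu hv
    have hk : k ∈ (↑(compo G c i) : Set (Fin n)) := by
      have hu' : (monoG G c).Reachable i u := mem_compo.mp (by simpa using hu)
      simpa using mem_compo.mpr (hu'.trans h.reachable)
    have hadj : (G.induce (↑(compo G c i) : Set (Fin n))).Adj ⟨u, hu⟩ ⟨k, hk⟩ := h.1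
    exact hadj.reachable.trans (ih hk hv)

lemma compo_connected (i : Fin n) :
    (G.induce (↑(compo G c i) : Set (Fin n))).Connected := by
  have hi : i ∈ (↑(compo G c i) : Set (Fin n)) := by simpa using (self_mem_compo (i := i))
  rw [SimpleGraph.connected_iff]
  refine ⟨?_, ⟨⟨i, hi⟩⟩⟩
  rintro ⟨u, hu⟩ ⟨v, hv⟩
  have hu' : (monoG G c).Reachable i u := mem_compo.mp (by simpa using hu)
  have hv' : (monoG G c).Reachable i v := mem_compo.mp (by simpa using hv)
  have r1 := hu'.elim fun w => induce_reach_of_walk w hi hu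
  have r2 := hv'.elim fun w => induce_reach_of_walk w hi hv
  exact r1.symm.trans r2

lemma pic_mem (G : SimpleGraph (Fin n)) (c : Fin n → Fin N) : pic G c ∈ connPartitions G := by
  rw [connPartitions, Finset.mem_filter]
  refine ⟨Finset.mem_univ _, ⟨?_, ?_, ?_⟩, ?_⟩
  · rintro B hB
    obtain ⟨i, -, rfl⟩ := Finset.mem_image.mp hB
    exact ⟨i, self_mem_compo⟩
  · rintro B hB C hC hne
    obtain ⟨i, -, rfl⟩ := Finset.mem_image.mp hB
    obtain ⟨j, -, rfl⟩ := Finset.mem_image.mp hC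
    rw [Finset.disjoint_left]
    intro x hx hx'
    exact hne ((compo_eq_of_reachable (mem_compo.mp hx)).trans
      (compo_eq_of_reachable (mem_compo.mp hx')).symm)
  · apply Finset.eq_univ_of_forall
    intro i
    exact Finset.mem_sup.mpr ⟨compo G c i, Finset.mem_image_of_mem _ (Finset.mem_univ i),
      self_mem_compo⟩
  · rintro B hB
    obtain ⟨i, -, rfl⟩ := Finset.mem_image.mp hB
    exact compo_connected i

lemma mono_block_reach {B : Finset (Fin n)}
    (hmono : ∀ a ∈ B, ∀ b ∈ B, c a = c b) :
    ∀ {u v : (↑B : Set (Fin n))}, (G.induce (↑B : Set (Fin n))).Walk u v →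
      (monoG G c).Reachable ↑u ↑v := by
  intro u v w
  induction w with
  | nil => exact SimpleGraph.Reachable.refl _
  | @cons u k v h _ ih =>
    have hadj : (monoG G c).Adj ↑u ↑k :=
      ⟨h, hmono _ (Finset.mem_coe.mp u.2) _ (Finset.mem_coe.mp k.2)⟩
    exact hadj.reachable.trans ih

/-- A `G`-connected partition `θ` has all blocks monochromatic iff it refines `pic G c`. -/
lemma constOn_iff_refines {θ : Finset (Finset (Fin n))} (hθ : θ ∈ connPartitions G) :
    (∀ B ∈ θ, ∀ a ∈ B, ∀ b ∈ B, c a = c b) ↔ Refines θ (pic G c) := by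
  rw [connPartitions, Finset.mem_filter] at hθ
  obtain ⟨-, ⟨hne, -, -⟩, hconn⟩ := hθ
  constructor
  · intro hconst B hB
    obtain ⟨i, hi⟩ := hne B hB
    refine ⟨compo G c i, Finset.mem_image_of_mem _ (Finset.mem_univ i), ?_⟩
    intro j hj
    have hcon := hconn B hB
    have hr : (G.induce (↑B : Set (Fin n))).Reachable ⟨i, Finset.mem_coe.mpr hi⟩
        ⟨j, Finset.mem_coe.mpr hj⟩ := hcon.preconnected _ _
    exact mem_compo.mpr (hr.elim fun w => mono_block_reach (hconst B hB) w)
  · intro href B hB a ha b hb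
    obtain ⟨C, hC, hBC⟩ := href B hB
    obtain ⟨i, -, rfl⟩ := Finset.mem_image.mp hC
    have hra := mem_compo.mp (hBC ha)
    have hrb := mem_compo.mp (hBC hb)
    exact (monoG_reach_color hra).symm.trans (monoG_reach_color hrb)

lemma pic_eq_bot_iff :
    pic G c = botPartition n ↔ ∀ a b, G.Adj a b → c a ≠ c b := by
  constructor
  · intro h a b hadj hc
    have hb : b ∈ compo G c a := mem_compo.mpr (SimpleGraph.Adj.reachable ⟨hadj, hc⟩)
    have hmem : compo G c a ∈ botPartition n := by
      rw [← h]; exact Finset.mem_image_of_mem _ (Finset.mem_univ a)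
    obtain ⟨x, -, hx⟩ := Finset.mem_image.mp hmem
    have ha' : a ∈ compo G c a := self_mem_compo
    rw [← hx] at ha' hb
    have : a = b := by
      rw [Finset.mem_singleton] at ha' hb; rw [ha', hb]
    exact G.loopless.irrefl a (this ▸ hadj)
  · intro hproper
    have hcomp : ∀ i : Fin n, compo G c i = {i} := by
      intro i
      ext j
      simp only [mem_compo, Finset.mem_singleton]
      constructor
      · intro hr
        refine hr.elim fun w => ?_
        cases w with
        | nil => rfl
        | cons h _ => exact absurd h.2 (hproper _ _ h.1)
      · rintro rfl; exact SimpleGraph.Reachable.refl _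
    rw [pic, botPartition]
    exact Finset.image_congr fun i _ => hcomp i

/-- Expansion of a product of power sums over blocks of a set partition as a sum over
colorings constant on every block. -/
lemma prod_powSum_eq {π : Finset (Finset (Fin n))} (hπ : IsSetPartition π) :
    (∏ B ∈ π, powSum N B.card) =
      ∑ c ∈ Finset.univ.filter
          (fun c : Fin n → Fin N => ∀ B ∈ π, ∀ a ∈ B, ∀ b ∈ B, c a = c b),
        ∏ i, MvPolynomial.X (c i) := by
  obtain ⟨hne, hdisj, hsup⟩ := hπ
  -- the block of each vertex
  have hball : ∀ i : Fin n, ∃ B : {B // B ∈ π}, i ∈ B.1 := by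
    intro i
    have : i ∈ π.sup id := hsup ▸ Finset.mem_univ i
    obtain ⟨B, hB, hiB⟩ := Finset.mem_sup.mp this
    exact ⟨⟨B, hB⟩, hiB⟩
  choose bl hbl using hball
  have huniq : ∀ (i : Fin n) (B : {B // B ∈ π}), i ∈ B.1 → bl i = B := by
    intro i B hiB
    by_contra hne'
    have hd := hdisj _ (bl i).2 _ B.2 (fun h => hne' (Subtype.ext h))
    exact Finset.disjoint_left.mp hd (hbl i) hiB
  -- pick a representative of each block
  have hpick : ∀ B : {B // B ∈ π}, ∃ x, x ∈ B.1 := fun B => hne B.1 B.2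
  choose pk hpk using hpick
  -- expand the product
  have step1 : (∏ B ∈ π, powSum N B.card) =
      ∑ p : {B // B ∈ π} → Fin N, ∏ B : {B // B ∈ π}, MvPolynomial.X (p B) ^ B.1.card := by
    rw [← Finset.prod_attach π (fun B => powSum N B.card), ← Finset.univ_eq_attach]
    simp only [powSum]
    rw [Finset.prod_univ_sum]
    rw [Fintype.piFinset_univ]
  rw [step1]
  refine Finset.sum_nbij' (fun p => fun i => p (bl i)) (fun c => fun B => c (pk B))
    ?_ ?_ ?_ ?_ ?_
  · intro p _
    simp only [Finset.mem_filter, Finset.mem_univ, true_and]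
    intro B hB a ha b hb
    rw [huniq a ⟨B, hB⟩ ha, huniq b ⟨B, hB⟩ hb]
  · intro c _; exact Finset.mem_univ _
  · intro p _
    funext B
    show p (bl (pk B)) = p B
    rw [huniq (pk B) B (hpk B)]
  · intro c hc
    rw [Finset.mem_filter] at hc
    funext i
    exact hc.2 (bl i).1 (bl i).2 _ (hpk (bl i)) _ (hbl i)
  · intro p _
    have hcov : Finset.univ = π.biUnion id := by
      rw [← Finset.sup_eq_biUnion, hsup]
    calc ∏ B : {B // B ∈ π}, MvPolynomial.X (p B) ^ B.1.card
        = ∏ B ∈ π.attach, MvPolynomial.X (p B) ^ B.1.card := by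
          rw [Finset.univ_eq_attach]
      _ = ∏ B ∈ π.attach, ∏ _i ∈ B.1, MvPolynomial.X (p B) := by
          refine Finset.prod_congr rfl fun B _ => ?_
          rw [Finset.prod_const]
      _ = ∏ B ∈ π.attach, ∏ i ∈ B.1, MvPolynomial.X (p (bl i)) := by
          refine Finset.prod_congr rfl fun B _ => Finset.prod_congr rfl fun i hi => ?_
          rw [huniq i B hi]
      _ = ∏ B ∈ π, ∏ i ∈ B, MvPolynomial.X (p (bl i)) := by
          exact Finset.prod_attach π (fun B => ∏ i ∈ B, MvPolynomial.X (p (bl i)))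
      _ = ∏ i ∈ π.biUnion id, MvPolynomial.X (p (bl i)) := by
          refine (Finset.prod_biUnion ?_).symm
          intro B hB C hC hBC
          exact hdisj B hB C hC hBC
      _ = ∏ i, MvPolynomial.X (p (bl i)) := by rw [← hcov]

end StanleyAux


/-- Stanley's power sum expansion of the chromatic symmetric polynomial:
`X_G = ∑_{π ∈ Π_{G,n}} μ(0̂,π) ∏_{B block of π} p_{|B|}`, where the Möbius function
`μ(0̂,·)` of `Π_{G,n}` is characterized by the recursion
`∑_{θ ∈ Π_{G,n}, θ ≤ π} μ(0̂,θ) = δ_{0̂,π}` for all `π ∈ Π_{G,n}`. -/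
theorem chromatic_psum_expansion (n N : ℕ) (hN : 1 ≤ N) (G : SimpleGraph (Fin n))
    (mu : Finset (Finset (Fin n)) → ℤ)
    (hmu : ∀ π ∈ connPartitions G,
      (∑ θ ∈ (connPartitions G).filter (fun θ => Refines θ π), mu θ) =
        if π = botPartition n then 1 else 0) :
    chromSym N n G =
      ∑ π ∈ connPartitions G, mu π • ∏ B ∈ π, powSum N B.card := by
  symm
  calc ∑ π ∈ connPartitions G, mu π • ∏ B ∈ π, powSum N B.card
      = ∑ π ∈ connPartitions G, ∑ c ∈ Finset.univ.filter
            (fun c : Fin n → Fin N => ∀ B ∈ π, ∀ a ∈ B, ∀ b ∈ B, c a = c b),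
          mu π • ∏ i, MvPolynomial.X (c i) := by
        refine Finset.sum_congr rfl fun π hπ => ?_
        have hsp : IsSetPartition π := by
          rw [connPartitions, Finset.mem_filter] at hπ
          exact hπ.2.1
        rw [prod_powSum_eq hsp]
        rw [Finset.smul_sum]
    _ = ∑ π ∈ connPartitions G, ∑ c : Fin n → Fin N,
          if Refines π (pic G c) then mu π • ∏ i, MvPolynomial.X (c i) else 0 := by
        refine Finset.sum_congr rfl fun π hπ => ?_
        rw [Finset.sum_filter]
        refine Finset.sum_congr rfl fun c _ => ?_
        rw [if_congr (constOn_iff_refines hπ) rfl rfl]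
    _ = ∑ c : Fin n → Fin N, ∑ π ∈ connPartitions G,
          if Refines π (pic G c) then mu π • ∏ i, MvPolynomial.X (c i) else 0 :=
        Finset.sum_comm
    _ = ∑ c : Fin n → Fin N,
          if (∀ a b, G.Adj a b → c a ≠ c b) then ∏ i, MvPolynomial.X (c i) else 0 := by
        refine Finset.sum_congr rfl fun c _ => ?_
        rw [← Finset.sum_filter]
        have h1 : (∑ π ∈ (connPartitions G).filter (fun π => Refines π (pic G c)),
            mu π • ∏ i, MvPolynomial.X (c i)) =
            (∑ π ∈ (connPartitions G).filter (fun π => Refines π (pic G c)), mu π) •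
              (∏ i, MvPolynomial.X (c i) : MvPolynomial (Fin N) ℤ) := by
          rw [Finset.sum_smul]
        rw [h1, hmu (pic G c) (pic_mem G c)]
        by_cases h : pic G c = botPartition n
        · rw [if_pos h, if_pos (pic_eq_bot_iff.mp h), one_smul]
        · rw [if_neg h, if_neg (fun hp => h (pic_eq_bot_iff.mpr hp)), zero_smul]
    _ = chromSym N n G := by
        rw [chromSym, Finset.sum_filter]
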